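/- The number of nondecreasing m-parking functions of length n is the Fuss-Catalan number (1/(mn+1)) binomial((m+1)n, n). -/

import Mathlib

open Finset
open Fin.NatCast

namespace PFaux

variable (m n : ℕ)

abbrev NN : ℕ := (m + 1) * n + 1

abbrev W := Fin (NN m n) → Bool

def val (b : Bool) : ℤ := if b then (m : ℤ) else -1

variable {m n}

def cnt (v : W m n) : ℕ := (univ.filter (fun i => v i = true)).card

def PS (v : W m n) (k : ℕ) : ℤ := ∑ j ∈ Finset.range k, val m (v (j : Fin (NN m n)))

def TC (v : W m n) (k : ℕ) : ℤ :=
  ∑ j ∈ Finset.range k, (if v (j : Fin (NN m n)) then (1 : ℤ) else 0)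

def Good (v : W m n) : Prop := ∀ k, k < NN m n → 0 ≤ PS v k

def rot (r : Fin (NN m n)) (v : W m n) : W m n := fun i => v (i + r)

lemma val_eq (b : Bool) : val m b = (m + 1) * (if b then (1:ℤ) else 0) - 1 := by
  cases b <;> simp [val]

lemma PS_eq (v : W m n) (k : ℕ) : PS v k = (m + 1) * TC v k - k := by
  simp only [PS, TC, val_eq, Finset.sum_sub_distrib, Finset.mul_sum, Finset.sum_const,
    Finset.card_range, nsmul_eq_mul, mul_one]

lemma PS_succ (v : W m n) (k : ℕ) :
    PS v (k + 1) = PS v k + val m (v (k : Fin (NN m n))) :=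
  Finset.sum_range_succ _ _

lemma cnt_cast (v : W m n) : (cnt v : ℤ) = TC v (NN m n) := by
  rw [cnt, Finset.card_filter]
  push_cast
  rw [TC, ← Fin.sum_univ_eq_sum_range (fun j => if v ((j : ℕ) : Fin (NN m n)) then (1:ℤ) else 0)]
  simp [Fin.cast_val_eq_self]

lemma PS_NN (v : W m n) (hv : cnt v = n) : PS v (NN m n) = -1 := by
  rw [PS_eq, ← cnt_cast, hv]
  push_cast
  ring

lemma natCast_add_NN (k : ℕ) : ((k + NN m n : ℕ) : Fin (NN m n)) = (k : Fin (NN m n)) := by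
  rw [Nat.cast_add, Fin.natCast_self, add_zero]

lemma PS_period (v : W m n) (hv : cnt v = n) (k : ℕ) :
    PS v (k + NN m n) = PS v k - 1 := by
  induction k with
  | zero => simpa [PS] using PS_NN v hv
  | succ k ih =>
    have h : k + 1 + NN m n = (k + NN m n) + 1 := by ring
    rw [h, PS_succ, ih, natCast_add_NN, PS_succ]
    ring

lemma PS_rot (r : Fin (NN m n)) (v : W m n) (k : ℕ) :
    PS (rot r v) k = PS v (r.val + k) - PS v r.val := by
  induction k with
  | zero => simp [PS]
  | succ k ih =>
    have h : r.val + (k + 1) = (r.val + k) + 1 := by ring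
    rw [PS_succ, ih, h, PS_succ]
    have : (rot r v) ((k : ℕ) : Fin (NN m n)) = v (((r.val + k : ℕ) : Fin (NN m n))) := by
      simp [rot]
      congr 1
      exact add_comm _ _
    rw [this]
    ring

lemma cnt_rot (r : Fin (NN m n)) (v : W m n) : cnt (rot r v) = cnt v := by
  unfold cnt rot
  apply Finset.card_bij (fun i _ => i + r)
  · intro a ha
    simpa using (Finset.mem_filter.mp ha).2
  · intro a _ b _ hab
    exact add_right_cancel hab
  · intro b hb
    refine ⟨b - r, ?_, by simp⟩
    simp only [Finset.mem_filter, Finset.mem_univ, true_and] at hb ⊢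
    simpa using hb


lemma exists_good_rot (v : W m n) (hv : cnt v = n) : ∃ r : Fin (NN m n), Good (rot r v) := by
  have hex : ∃ j, j < NN m n ∧ ∀ i, i < NN m n → PS v j ≤ PS v i := by
    obtain ⟨r, hr, hmin⟩ := Finset.exists_min_image (Finset.range (NN m n)) (PS v)
      ⟨0, by simp [NN]⟩
    exact ⟨r, Finset.mem_range.mp hr, fun i hi => hmin i (Finset.mem_range.mpr hi)⟩
  classical
  set r0 := Nat.find hex with hr0
  obtain ⟨hr0lt, hr0min⟩ := Nat.find_spec hex
  have hstrict : ∀ j, j < r0 → PS v r0 < PS v j := by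
    intro j hj
    by_contra hle
    push_neg at hle
    have hjlt : j < NN m n := lt_trans hj hr0lt
    have : j < r0 → ¬(j < NN m n ∧ ∀ i, i < NN m n → PS v j ≤ PS v i) := fun _ =>
      Nat.find_min hex hj
    apply this hj
    exact ⟨hjlt, fun i hi => le_trans hle (hr0min i hi)⟩
  refine ⟨⟨r0, hr0lt⟩, ?_⟩
  intro k hk
  rw [PS_rot]
  simp only [Fin.val_mk]
  rcases lt_or_ge (r0 + k) (NN m n) with h | h
  · linarith [hr0min (r0 + k) h]
  · have hj : r0 + k = (r0 + k - NN m n) + NN m n := by omega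
    have hjlt : r0 + k - NN m n < r0 := by omega
    rw [hj, PS_period v hv]
    linarith [hstrict _ hjlt]

lemma good_rot_unique (v : W m n) (hv : cnt v = n) {a b : Fin (NN m n)}
    (ha : Good (rot a v)) (hb : Good (rot b v)) : a = b := by
  by_contra hab
  -- wlog a.val < b.val
  wlog h : a.val < b.val generalizing a b
  · have hne : a.val ≠ b.val := fun hh => hab (Fin.ext hh)
    exact this hb ha (Ne.symm hab) (by omega)
  have hk : b.val - a.val < NN m n := by omega
  have h1 := ha (b.val - a.val) hk
  rw [PS_rot] at h1
  have hab' : a.val + (b.val - a.val) = b.val := by omega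
  rw [hab'] at h1
  have hk2 : NN m n - (b.val - a.val) < NN m n := by omega
  have h2 := hb (NN m n - (b.val - a.val)) hk2
  rw [PS_rot] at h2
  have hb2 : b.val + (NN m n - (b.val - a.val)) = a.val + NN m n := by omega
  rw [hb2, PS_period v hv] at h2
  linarith


lemma rot_rot (a b : Fin (NN m n)) (v : W m n) : rot a (rot b v) = rot (a + b) v := by
  funext i
  show v (i + a + b) = v (i + (a + b))
  rw [add_assoc]

lemma rot_zero (v : W m n) : rot 0 v = v := by
  funext i
  show v (i + 0) = v i
  rw [add_zero]

variable (m n)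

abbrev A := {v : W m n // cnt v = n}

abbrev G := {v : W m n // cnt v = n ∧ Good v}

variable {m n}

noncomputable def rho (a : A m n) : Fin (NN m n) := (exists_good_rot a.1 a.2).choose

lemma rho_spec (a : A m n) : Good (rot (rho a) a.1) := (exists_good_rot a.1 a.2).choose_spec

noncomputable def E1 : A m n ≃ G m n × Fin (NN m n) where
  toFun a := (⟨rot (rho a) a.1, (cnt_rot _ _).trans a.2, rho_spec a⟩, rho a)
  invFun p := ⟨rot (-p.2) p.1.1, (cnt_rot _ _).trans p.1.2.1⟩
  left_inv a := by
    apply Subtype.ext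
    show rot (-(rho a)) (rot (rho a) a.1) = a.1
    rw [rot_rot, neg_add_cancel, rot_zero]
  right_inv p := by
    obtain ⟨⟨w, hw, hgw⟩, k⟩ := p
    have hu : cnt (rot (-k) w) = n := (cnt_rot _ _).trans hw
    set u : A m n := ⟨rot (-k) w, hu⟩ with hudef
    have hku : rot k u.1 = w := by
      show rot k (rot (-k) w) = w
      rw [rot_rot, add_neg_cancel, rot_zero]
    have hgk : Good (rot k u.1) := by rw [hku]; exact hgw
    have hrk : rho u = k := good_rot_unique u.1 u.2 (rho_spec u) hgk
    refine Prod.ext ?_ ?_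
    · apply Subtype.ext
      show rot (rho u) u.1 = w
      rw [hrk, hku]
    · exact hrk

def E2 : A m n ≃ {s : Finset (Fin (NN m n)) // s.card = n} where
  toFun v := ⟨univ.filter (fun i => v.1 i = true), v.2⟩
  invFun s := ⟨fun i => decide (i ∈ s.1), by
    unfold cnt
    have h : univ.filter (fun i => decide (i ∈ s.1) = true) = s.1 := by ext i; simp
    rw [h, s.2]⟩
  left_inv v := Subtype.ext (funext fun i => by simp)
  right_inv s := Subtype.ext (by ext i; simp)

lemma card_A : Nat.card (A m n) = (NN m n).choose n := by
  rw [Nat.card_congr (E2 (m := m) (n := n)), Nat.card_eq_fintype_card,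
    Fintype.card_finset_len, Fintype.card_fin]

lemma card_A_eq : Nat.card (A m n) = Nat.card (G m n) * NN m n := by
  rw [Nat.card_congr (E1 (m := m) (n := n)), Nat.card_prod]
  simp


/-! ### Monotone functions to good words -/

variable (m n)

abbrev MF := {f : Fin n → ℕ // Monotone f ∧ ∀ i : Fin n, 1 ≤ f i ∧ f i ≤ m * i.val + 1}

variable {m n}

def toW (f : Fin n → ℕ) : W m n := fun j => decide (∃ i : Fin n, f i + i.val = j.val + 1)

section toW

variable {f : Fin n → ℕ} (hmono : Monotone f) (hf : ∀ i : Fin n, 1 ≤ f i ∧ f i ≤ m * i.val + 1)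

include hf in
lemma hup (i : Fin n) : f i + i.val ≤ (m + 1) * n := by
  have h1 : (m + 1) * (i.val + 1) = (m + 1) * i.val + (m + 1) := by ring
  have h2 : (m + 1) * (i.val + 1) ≤ (m + 1) * n := Nat.mul_le_mul_left _ i.isLt
  have h3 : (m + 1) * i.val = m * i.val + i.val := by ring
  have h4 := (hf i).2
  omega

set_option linter.unusedSectionVars false in
include hmono hf in
lemma addIdx_inj : ∀ i i' : Fin n, f i + i.val = f i' + i'.val → i = i' := by
  intro i i' h
  rcases lt_trichotomy i i' with hlt | heq | hgt
  · have h1 := hmono (le_of_lt hlt)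
    have h2 : i.val < i'.val := hlt
    omega
  · exact heq
  · have h1 := hmono (le_of_lt hgt)
    have h2 : i'.val < i.val := hgt
    omega

include hmono hf in
lemma TC_toW {k : ℕ} (hk : k ≤ NN m n) :
    TC (toW f : W m n) k = ((univ.filter (fun i : Fin n => f i + i.val ≤ k)).card : ℤ) := by
  rw [TC, Finset.sum_boole]
  congr 1
  refine (Finset.card_bij (fun i _ => f i + i.val - 1) ?_ ?_ ?_).symm
  · intro i hi
    rw [Finset.mem_filter] at hi
    have h1 := (hf i).1
    rw [Finset.mem_filter, Finset.mem_range]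
    have hNN : NN m n = (m + 1) * n + 1 := rfl
    have hup' := hup hf i
    constructor
    · show f i + i.val - 1 < k
      omega
    · have hlt : f i + i.val - 1 < NN m n := by omega
      show toW f (((f i + i.val - 1 : ℕ) : Fin (NN m n))) = true
      simp only [toW, decide_eq_true_eq]
      rw [Fin.val_cast_of_lt hlt]
      exact ⟨i, by omega⟩
  · intro a ha b hb hab
    have h1 := (hf a).1
    have h2 := (hf b).1
    have hab' : f a + a.val - 1 = f b + b.val - 1 := hab
    exact addIdx_inj hmono hf a b (by omega)
  · intro j hj
    rw [Finset.mem_filter, Finset.mem_range] at hj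
    obtain ⟨hjk, hjw⟩ := hj
    have hlt : j < NN m n := lt_of_lt_of_le hjk hk
    simp only [toW, decide_eq_true_eq] at hjw
    rw [Fin.val_cast_of_lt hlt] at hjw
    obtain ⟨i, hi⟩ := hjw
    refine ⟨i, Finset.mem_filter.mpr ⟨Finset.mem_univ _, by omega⟩, ?_⟩
    show f i + i.val - 1 = j
    omega

include hmono hf in
lemma cnt_toW : cnt (toW f : W m n) = n := by
  have h1 : (cnt (toW f : W m n) : ℤ) = TC (toW f : W m n) (NN m n) := cnt_cast _
  rw [TC_toW hmono hf (le_refl _)] at h1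
  have h2 : univ.filter (fun i : Fin n => f i + i.val ≤ NN m n) = univ := by
    apply Finset.filter_true_of_mem
    intro i _
    have := hup hf i
    have hNN : NN m n = (m + 1) * n + 1 := rfl
    omega
  rw [h2, Finset.card_univ, Fintype.card_fin] at h1
  exact_mod_cast h1

include hmono hf in
lemma good_toW : Good (toW f : W m n) := by
  intro k hk
  rw [PS_eq, TC_toW hmono hf (le_of_lt hk)]
  set c := (univ.filter (fun i : Fin n => f i + i.val ≤ k)).card with hc
  have key : k ≤ (m + 1) * c := by
    rcases lt_or_ge c n with hcn | hcn
    · have hnot : ¬ (f ⟨c, hcn⟩ + c ≤ k) := by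
        intro hmem
        have hsub : Finset.Iic (⟨c, hcn⟩ : Fin n) ⊆
            univ.filter (fun i : Fin n => f i + i.val ≤ k) := by
          intro j hj
          rw [Finset.mem_Iic] at hj
          rw [Finset.mem_filter]
          refine ⟨Finset.mem_univ _, ?_⟩
          have h1 := hmono hj
          have h2 : j.val ≤ c := hj
          omega
        have h3 := Finset.card_le_card hsub
        rw [Fin.card_Iic, ← hc] at h3
        simp only [Fin.val_mk] at h3
        omega
      have h1 := (hf ⟨c, hcn⟩).2
      simp only [Fin.val_mk] at h1
      have h2 : (m + 1) * c = m * c + c := by ring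
      omega
    · have h1 : (m + 1) * n ≤ (m + 1) * c := Nat.mul_le_mul_left _ hcn
      have hNN : NN m n = (m + 1) * n + 1 := rfl
      omega
  have : (k : ℤ) ≤ (m + 1) * c := by exact_mod_cast key
  omega

end toW

/-! ### Good words to monotone functions -/

lemma sm_key {t : Fin n → ℕ} (h : StrictMono t) :
    ∀ d (i j : Fin n), j.val = i.val + d → t i + d ≤ t j := by
  intro d
  induction d with
  | zero =>
    intro i j hj
    have : i = j := Fin.ext (by omega)
    subst this
    omega
  | succ d ih =>
    intro i j hj
    have hlt : i.val + d < n := by omega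
    have h1 := ih i ⟨i.val + d, hlt⟩ rfl
    have h2 : t ⟨i.val + d, hlt⟩ < t j := h (by rw [Fin.lt_def]; simp; omega)
    omega

lemma sm_le {t : Fin n → ℕ} (h : StrictMono t) (i : Fin n) : i.val ≤ t i := by
  have hpos : 0 < n := i.pos
  have := sm_key h i.val ⟨0, hpos⟩ i (by simp)
  omega

section fromW

variable (g : G m n)

def Tset : Finset (Fin (NN m n)) := univ.filter (fun i => g.1 i = true)

def tfun : Fin n → ℕ := fun i => ((Tset g).orderEmbOfFin g.2.1 i).val

def fromW : Fin n → ℕ := fun i => tfun g i + 1 - i.val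

lemma tfun_strictMono : StrictMono (tfun g) := by
  intro i j hij
  exact ((Tset g).orderEmbOfFin g.2.1).strictMono hij

lemma tfun_lt (i : Fin n) : tfun g i < NN m n := ((Tset g).orderEmbOfFin g.2.1 i).isLt

lemma tfun_mem (i : Fin n) : g.1 (((tfun g i : ℕ) : Fin (NN m n))) = true := by
  have hmem := Finset.orderEmbOfFin_mem (Tset g) g.2.1 i
  simp only [Tset, Finset.mem_filter] at hmem
  have : ((tfun g i : ℕ) : Fin (NN m n)) = (Tset g).orderEmbOfFin g.2.1 i :=
    Fin.ext (Fin.val_cast_of_lt (tfun_lt g i))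
  rw [this]
  exact hmem.2

lemma TC_tfun (i : Fin n) : TC g.1 (tfun g i) = (i.val : ℤ) := by
  rw [TC, Finset.sum_boole]
  have hcard : ((Finset.range (tfun g i)).filter
      (fun j => g.1 ((j : ℕ) : Fin (NN m n)) = true)).card = i.val := by
    rw [show i.val = (univ.filter (fun j : Fin n => j < i)).card by
      rw [show univ.filter (fun j : Fin n => j < i) = Finset.Iio i by ext; simp, Fin.card_Iio]]
    refine (Finset.card_bij (fun j _ => tfun g j) ?_ ?_ ?_).symm
    · intro j hj
      rw [Finset.mem_filter] at hj
      rw [Finset.mem_filter, Finset.mem_range]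
      refine ⟨tfun_strictMono g hj.2, ?_⟩
      show g.1 (((tfun g j : ℕ) : Fin (NN m n))) = true
      exact tfun_mem g j
    · intro a _ b _ hab
      exact (tfun_strictMono g).injective hab
    · intro j hj
      rw [Finset.mem_filter, Finset.mem_range] at hj
      obtain ⟨hjk, hjw⟩ := hj
      have hjN : j < NN m n := lt_trans hjk (tfun_lt g i)
      have hjT : (⟨j, hjN⟩ : Fin (NN m n)) ∈ Tset g := by
        simp only [Tset, Finset.mem_filter]
        refine ⟨Finset.mem_univ _, ?_⟩
        have hcast : ((j : ℕ) : Fin (NN m n)) = ⟨j, hjN⟩ := Fin.ext (Fin.val_cast_of_lt hjN)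
        rwa [hcast] at hjw
      have : (⟨j, hjN⟩ : Fin (NN m n)) ∈ Set.range ((Tset g).orderEmbOfFin g.2.1) := by
        rw [Finset.range_orderEmbOfFin (Tset g) g.2.1]
        exact hjT
      obtain ⟨a, ha⟩ := this
      have hta : tfun g a = j := by rw [tfun, ha]
      have : a < i := by
        have := (tfun_strictMono g).lt_iff_lt (a := a) (b := i)
        omega
      exact ⟨a, Finset.mem_filter.mpr ⟨Finset.mem_univ _, this⟩, hta⟩
  rw [hcard]

lemma tfun_le (i : Fin n) : tfun g i ≤ (m + 1) * i.val := by
  have hgood := g.2.2 (tfun g i) (tfun_lt g i)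
  rw [PS_eq, TC_tfun] at hgood
  have : ((tfun g i : ℕ) : ℤ) ≤ (m + 1) * i.val := by omega
  exact_mod_cast this

lemma fromW_mono : Monotone (fromW g) := by
  intro i j hij
  have h1 := sm_key (tfun_strictMono g) (j.val - i.val) i j (by
    have : i.val ≤ j.val := hij
    omega)
  have h2 := sm_le (tfun_strictMono g) i
  have h3 : i.val ≤ j.val := hij
  simp only [fromW]
  omega

lemma fromW_bounds (i : Fin n) : 1 ≤ fromW g i ∧ fromW g i ≤ m * i.val + 1 := by
  have h1 := sm_le (tfun_strictMono g) i
  have h2 := tfun_le g i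
  have h3 : (m + 1) * i.val = m * i.val + i.val := by ring
  simp only [fromW]
  omega

end fromW


lemma fromW_toW {f : Fin n → ℕ} (hmono : Monotone f)
    (hf : ∀ i : Fin n, 1 ≤ f i ∧ f i ≤ m * i.val + 1)
    (g : G m n) (hgv : g.1 = toW f) (i : Fin n) : fromW g i = f i := by
  have hlt : ∀ x : Fin n, f x + x.val - 1 < NN m n := by
    intro x
    have := hup hf x
    have h1 := (hf x).1
    have hNN : NN m n = (m + 1) * n + 1 := rfl
    omega
  have hsm : StrictMono (fun x : Fin n => (⟨f x + x.val - 1, hlt x⟩ : Fin (NN m n))) := by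
    intro a b hab
    rw [Fin.lt_def]
    simp only [Fin.val_mk]
    have h1 := hmono (le_of_lt hab)
    have h2 : a.val < b.val := hab
    have h3 := (hf a).1
    omega
  have hfs : ∀ x : Fin n, (⟨f x + x.val - 1, hlt x⟩ : Fin (NN m n)) ∈ Tset g := by
    intro x
    simp only [Tset, Finset.mem_filter]
    refine ⟨Finset.mem_univ _, ?_⟩
    rw [hgv]
    simp only [toW, decide_eq_true_eq, Fin.val_mk]
    have := (hf x).1
    exact ⟨x, by omega⟩
  have huniq := Finset.orderEmbOfFin_unique (f := fun x : Fin n =>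
    (⟨f x + x.val - 1, hlt x⟩ : Fin (NN m n))) g.2.1 hfs hsm
  have hti : tfun g i = f i + i.val - 1 :=
    (congrArg Fin.val (congrFun huniq i)).symm
  rw [fromW, hti]
  have := (hf i).1
  omega

lemma toW_fromW (g : G m n) : toW (fromW g) = g.1 := by
  funext j
  have h1 : ∀ i : Fin n, fromW g i + i.val = tfun g i + 1 := fun i => by
    have := sm_le (tfun_strictMono g) i
    simp only [fromW]
    omega
  have hiff : (∃ i : Fin n, fromW g i + i.val = j.val + 1) ↔ g.1 j = true := by
    constructor
    · rintro ⟨i, hi⟩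
      rw [h1 i] at hi
      have hji : tfun g i = j.val := by omega
      have hj : ((tfun g i : ℕ) : Fin (NN m n)) = j := by
        rw [hji]; exact Fin.cast_val_eq_self j
      have := tfun_mem g i
      rwa [hj] at this
    · intro hj
      have hjT : j ∈ Tset g := by
        simp only [Tset, Finset.mem_filter]
        exact ⟨Finset.mem_univ _, hj⟩
      have hrange : j ∈ Set.range ((Tset g).orderEmbOfFin g.2.1) := by
        rw [Finset.range_orderEmbOfFin (Tset g) g.2.1]
        exact hjT
      obtain ⟨a, ha⟩ := hrange
      refine ⟨a, ?_⟩
      rw [h1 a, tfun, ha]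
  show decide _ = g.1 j
  cases hb : g.1 j
  · rw [decide_eq_false_iff_not]
    intro hP
    have hcontra := hiff.mp hP
    rw [hb] at hcontra
    exact Bool.false_ne_true hcontra
  · rw [decide_eq_true_eq]
    exact hiff.mpr hb

noncomputable def E3 : MF m n ≃ G m n where
  toFun f := ⟨toW f.1, cnt_toW f.2.1 f.2.2, good_toW f.2.1 f.2.2⟩
  invFun g := ⟨fromW g, fromW_mono g, fun i => fromW_bounds g i⟩
  left_inv f := by
    apply Subtype.ext
    funext i
    exact fromW_toW f.2.1 f.2.2 ⟨toW f.1, cnt_toW f.2.1 f.2.2, good_toW f.2.1 f.2.2⟩ rfl i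
  right_inv g := by
    apply Subtype.ext
    exact toW_fromW g

def E4 : {w : List ℕ //
      w.length = n ∧ w.Pairwise (· ≤ ·) ∧ (∀ a ∈ w, 1 ≤ a) ∧
      ∀ i (h : i < w.length), w.get ⟨i, h⟩ ≤ m * i + 1} ≃ MF m n where
  toFun w := ⟨fun i => w.1.get (Fin.cast w.2.1.symm i), by
      intro i j hij
      apply w.2.2.1.rel_get_of_le
      rw [Fin.le_def]
      simp only [Fin.coe_cast]
      exact hij, by
      intro i
      constructor
      · exact w.2.2.2.1 _ (List.get_mem _ _)
      · exact w.2.2.2.2 i.val (by rw [w.2.1]; exact i.isLt)⟩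
  invFun f := ⟨List.ofFn f.1, by
      refine ⟨List.length_ofFn, (List.sortedLE_ofFn_iff.mpr f.2.1).pairwise, ?_, ?_⟩
      · intro a ha
        rw [List.mem_ofFn] at ha
        obtain ⟨i, rfl⟩ := ha
        exact (f.2.2 i).1
      · intro i h
        rw [List.get_ofFn]
        have hb := (f.2.2 (Fin.cast List.length_ofFn ⟨i, h⟩)).2
        simpa only [Fin.coe_cast] using hb⟩
  left_inv w := by
    apply Subtype.ext
    apply List.ext_get (by simp [w.2.1])
    intro i h1 h2
    rw [List.get_ofFn]
    rfl
  right_inv f := by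
    apply Subtype.ext
    funext i
    change (List.ofFn f.1).get _ = f.1 i
    rw [List.get_ofFn]
    congr 1

theorem main (m n : ℕ) :
    Nat.card {w : List ℕ //
        w.length = n ∧ w.Pairwise (· ≤ ·) ∧ (∀ a ∈ w, 1 ≤ a) ∧
        ∀ i (h : i < w.length), w.get ⟨i, h⟩ ≤ m * i + 1} =
      Nat.choose ((m + 1) * n) n / (m * n + 1) := by
  have h1 : Nat.card {w : List ℕ //
      w.length = n ∧ w.Pairwise (· ≤ ·) ∧ (∀ a ∈ w, 1 ≤ a) ∧
      ∀ i (h : i < w.length), w.get ⟨i, h⟩ ≤ m * i + 1} = Nat.card (G m n) :=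
    Nat.card_congr ((E4 (m := m) (n := n)).trans (E3 (m := m) (n := n)))
  have h2 : Nat.card (G m n) * NN m n = (NN m n).choose n := by
    rw [← card_A_eq, card_A]
  have h3 := Nat.choose_mul_succ_eq ((m + 1) * n) n
  have h4 : (m + 1) * n + 1 - n = m * n + 1 := by
    have : (m + 1) * n = m * n + n := by ring
    omega
  have h5 : ((m + 1) * n).choose n * ((m + 1) * n + 1) =
      (Nat.card (G m n) * (m * n + 1)) * ((m + 1) * n + 1) := by
    rw [h3, h4, ← h2]
    ring
  have h6 : ((m + 1) * n).choose n = Nat.card (G m n) * (m * n + 1) :=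
    Nat.eq_of_mul_eq_mul_right (by positivity) h5
  rw [h1, h6, Nat.mul_div_cancel _ (by positivity)]

end PFaux

/-- The number of nondecreasing `m`-parking functions of length `n`
(nondecreasing words `a₁ ≤ ⋯ ≤ a_n` of positive integers with `a_i ≤ m(i−1)+1`)
is the Fuss–Catalan number `(1/(mn+1))·C((m+1)n, n)`. -/
theorem card_nondecreasing_mParkingFunctions (m n : ℕ) (hm : 1 ≤ m) :
    Nat.card {w : List ℕ //
        w.length = n ∧ w.Pairwise (· ≤ ·) ∧ (∀ a ∈ w, 1 ≤ a) ∧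
        ∀ i (h : i < w.length), w.get ⟨i, h⟩ ≤ m * i + 1} =
      Nat.choose ((m + 1) * n) n / (m * n + 1) :=
  PFaux.main m n
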